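/- Let α be a PV-number of degree d with conjugates α = α_1, α_2, …, α_d, and let ξ = (e_0 + e_1 α + ⋯ + e_{d−1} α^{d−1})/L with e_0, …, e_{d−1} ∈ ℤ and L ∈ ℕ, ξ > 0. Then every limit point of the sequence of fractional parts {ξα^n}, n = 1, 2, 3, …, belongs to the set {0, 1/L, 2/L, …, (L−1)/L, 1}. In particular, the set of limit points is finite. -/

import Mathlib

open Polynomial Filter Topology

/-- A Pisot–Vijayaraghavan (PV) number: a real algebraic integer `α > 1` all of whose
conjugates other than `α` itself have absolute value strictly less than `1`. -/
def IsPVNumber (α : ℝ) : Prop :=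
  1 < α ∧ IsIntegral ℤ α ∧
    ∀ z : ℂ, aeval z (minpoly ℚ α) = 0 → z ≠ (α : ℂ) → ‖z‖ < 1

open IntermediateField in
/-- Key analytic lemma: for a PV number α and ξ = (∑ eᵢ αⁱ)/L, the quantity L ξ αⁿ
approaches the integers. -/
theorem pisot_dist_int (α : ℝ) (hα : IsPVNumber α) (d : ℕ)
    (e : Fin d → ℤ) (L : ℕ) (hL : 0 < L) (ξ : ℝ)
    (hξdef : ξ = (∑ i : Fin d, (e i : ℝ) * α ^ (i : ℕ)) / L) :
    ∃ m : ℕ → ℤ, Tendsto (fun n : ℕ => (L : ℝ) * ξ * α ^ n - (m n : ℝ)) atTop (𝓝 0) := by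
  classical
  obtain ⟨hα1, hint, hconj⟩ := hα
  have hQ : IsIntegral ℚ α := hint.tower_top
  let K := ℚ⟮α⟯
  let a : K := AdjoinSimple.gen ℚ α
  haveI : FiniteDimensional ℚ K := adjoin.finiteDimensional hQ
  let σ₀ : K →ₐ[ℚ] ℂ := (Complex.ofRealAm.restrictScalars ℚ).comp K.val
  have hσ₀a : σ₀ a = (α : ℂ) := rfl
  have haZ : IsIntegral ℤ a := by
    rw [← isIntegral_algebraMap_iff (algebraMap K ℝ).injective]
    rwa [AdjoinSimple.algebraMap_gen]
  let βK : K := ∑ i : Fin d, (e i : K) * a ^ (i : ℕ)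
  have hβZ : IsIntegral ℤ βK := by
    refine IsIntegral.sum _ fun i _ => IsIntegral.mul ?_ (haZ.pow _)
    rw [← eq_intCast (algebraMap ℤ K) (e i)]
    exact isIntegral_algebraMap
  -- the traces are integers
  have hb : ∀ n : ℕ, ∃ mm : ℤ, (mm : ℚ) = Algebra.trace ℚ K (βK * a ^ n) := by
    intro n
    obtain ⟨y, hy⟩ := IsIntegrallyClosed.isIntegral_iff.mp
      (Algebra.isIntegral_trace (hβZ.mul (haZ.pow n)) :
        IsIntegral ℤ (Algebra.trace ℚ K (βK * a ^ n)))
    exact ⟨y, by rw [← hy]; simp⟩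
  choose m hm using hb
  refine ⟨m, ?_⟩
  -- embeddings
  let pb := adjoin.powerBasis hQ
  have hpbgen : pb.gen = a := adjoin.powerBasis_gen hQ
  have hroot : ∀ σ : K →ₐ[ℚ] ℂ, aeval (σ a) (minpoly ℚ α) = 0 := fun σ => by
    rw [aeval_algHom_apply]
    convert map_zero σ
    apply (algebraMap K ℝ).injective
    rw [map_zero, ← aeval_algebraMap_apply]
    exact minpoly.aeval ℚ α
  have habs : ∀ σ : K →ₐ[ℚ] ℂ, σ ≠ σ₀ → ‖σ a‖ < 1 := fun σ hσ => by
    refine hconj _ (hroot σ) fun h => hσ (PowerBasis.algHom_ext pb ?_)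
    convert h.trans hσ₀a.symm using 2 <;> (rw [hpbgen]; rfl)
  -- value of σ₀ on βK
  have hS : (∑ i : Fin d, (e i : ℝ) * α ^ (i : ℕ)) = ξ * L := by
    rw [hξdef]; field_simp
  have hσ₀β : σ₀ βK = ((ξ * L : ℝ) : ℂ) := by
    rw [← hS]
    simp only [βK, map_sum, map_mul, map_pow, map_intCast, hσ₀a]
    push_cast
    ring
  set s : Finset (K →ₐ[ℚ] ℂ) := Finset.univ.erase σ₀ with hs
  have key : ∀ n : ℕ, (((L : ℝ) * ξ * α ^ n - (m n : ℝ) : ℝ) : ℂ)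
      = - ∑ σ ∈ s, σ βK * (σ a) ^ n := by
    intro n
    have h1 : algebraMap ℚ ℂ ((m n : ℚ)) = ∑ σ : K →ₐ[ℚ] ℂ, σ (βK * a ^ n) := by
      rw [hm n]; exact trace_eq_sum_embeddings (E := ℂ)
    have h2 : ∑ σ : K →ₐ[ℚ] ℂ, σ (βK * a ^ n)
        = ((ξ * L : ℝ) : ℂ) * (α : ℂ) ^ n + ∑ σ ∈ s, σ βK * (σ a) ^ n := by
      rw [← Finset.add_sum_erase _ _ (Finset.mem_univ σ₀)]
      simp only [map_mul, map_pow, hσ₀a, hσ₀β, hs]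
    have h3 : (m n : ℂ) = ((ξ * L : ℝ) : ℂ) * (α : ℂ) ^ n + ∑ σ ∈ s, σ βK * (σ a) ^ n := by
      rw [← map_intCast (algebraMap ℚ ℂ), h1, h2]
    push_cast [h3]
    ring
  rw [tendsto_zero_iff_abs_tendsto_zero]
  refine squeeze_zero (fun n => abs_nonneg _)
    (g := fun n => ∑ σ ∈ s, ‖σ βK‖ * ‖σ a‖ ^ n) (fun n => ?_) ?_
  · calc |(L : ℝ) * ξ * α ^ n - (m n : ℝ)|
        = ‖((((L : ℝ) * ξ * α ^ n - (m n : ℝ) : ℝ)) : ℂ)‖ := (Complex.norm_real _).symm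
      _ = ‖∑ σ ∈ s, σ βK * (σ a) ^ n‖ := by rw [key n, norm_neg]
      _ ≤ ∑ σ ∈ s, ‖σ βK * (σ a) ^ n‖ := norm_sum_le _ _
      _ = ∑ σ ∈ s, ‖σ βK‖ * ‖σ a‖ ^ n := by
          simp [map_mul, map_pow]
  · have : Tendsto (fun n : ℕ => ∑ σ ∈ s, ‖σ βK‖ * ‖σ a‖ ^ n)
        atTop (𝓝 (∑ σ ∈ s, ‖σ βK‖ * 0)) :=
      tendsto_finset_sum _ fun σ hσ =>
        (tendsto_pow_atTop_nhds_zero_of_lt_one (norm_nonneg _)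
          (habs σ (Finset.ne_of_mem_erase hσ))).const_mul _
    simpa using this

/-- If `α` is a PV-number of degree `d` and `ξ = (e₀ + e₁ α + ⋯ + e_{d-1} α^{d-1})/L > 0`
with integers `e᎐` and `L ∈ ℕ`, then every limit point of the sequence of fractional parts
`{ξ αⁿ}` belongs to `{0, 1/L, …, (L-1)/L, 1}`; in particular the set of limit points is
finite. -/
theorem limit_points_subset_of_pisot (α : ℝ) (hα : IsPVNumber α) (d : ℕ)
    (hd : (minpoly ℚ α).natDegree = d) (e : Fin d → ℤ) (L : ℕ) (hL : 0 < L) (ξ : ℝ)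
    (hξdef : ξ = (∑ i : Fin d, (e i : ℝ) * α ^ (i : ℕ)) / L) (hξpos : 0 < ξ) :
    (∀ μ ∈ {x : ℝ | MapClusterPt x atTop (fun n : ℕ => Int.fract (ξ * α ^ n))},
        ∃ j : ℕ, j ≤ L ∧ μ = (j : ℝ) / L) ∧
      {x : ℝ | MapClusterPt x atTop (fun n : ℕ => Int.fract (ξ * α ^ n))}.Finite := by
  obtain ⟨m, hm⟩ := pisot_dist_int α hα d e L hL ξ hξdef
  set u : ℕ → ℝ := fun n => Int.fract (ξ * α ^ n) with hu
  have hL' : (0 : ℝ) < L := by exact_mod_cast hL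
  have main : ∀ μ ∈ {x : ℝ | MapClusterPt x atTop u}, ∃ j : ℕ, j ≤ L ∧ μ = (j : ℝ) / L := by
    intro μ hμ
    rw [Set.mem_setOf_eq, mapClusterPt_iff_frequently] at hμ
    have hμmem : ∀ ε : ℝ, 0 < ε → ∃ n, |u n - μ| < ε ∧ |(L : ℝ) * ξ * α ^ n - (m n : ℝ)| < ε := by
      intro ε hε
      have h1 : ∃ᶠ n in atTop, u n ∈ Metric.ball μ ε := hμ _ (Metric.ball_mem_nhds μ hε)
      have h2 : ∀ᶠ n in atTop, |(L : ℝ) * ξ * α ^ n - (m n : ℝ)| < ε := by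
        have := Metric.tendsto_nhds.mp hm ε hε
        simpa [Real.dist_eq] using this
      obtain ⟨n, hn1, hn2⟩ := (h1.and_eventually h2).exists
      exact ⟨n, by simpa [Real.dist_eq] using hn1, hn2⟩
    have h0le : 0 ≤ μ := by
      by_contra h
      push_neg at h
      obtain ⟨n, hn, -⟩ := hμmem (-μ) (by linarith)
      have := Int.fract_nonneg (ξ * α ^ n)
      have h2 : u n - μ < -μ := (abs_lt.mp hn).2
      simp only [hu] at h2
      linarith
    have hle1 : μ ≤ 1 := by
      by_contra h
      push_neg at h
      obtain ⟨n, hn, -⟩ := hμmem (μ - 1) (by linarith)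
      have := Int.fract_lt_one (ξ * α ^ n)
      have h2 : -(μ - 1) < u n - μ := (abs_lt.mp hn).1
      simp only [hu] at h2
      linarith
    have hcl : (L : ℝ) * μ ∈ closure (Set.range ((↑) : ℤ → ℝ)) := by
      rw [Metric.mem_closure_iff]
      intro ε hε
      obtain ⟨n, h1, h2⟩ := hμmem (ε / (2 * (L + 1))) (by positivity)
      refine ⟨((m n - L * ⌊ξ * α ^ n⌋ : ℤ) : ℝ), Set.mem_range_self _, ?_⟩
      have hun : (L : ℝ) * u n = (L : ℝ) * ξ * α ^ n - (L : ℝ) * (⌊ξ * α ^ n⌋ : ℝ) := by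
        simp only [hu, Int.fract]
        ring
      rw [Real.dist_eq]
      have hb1 : |(L : ℝ) * μ - (L : ℝ) * u n| < (L : ℝ) * (ε / (2 * (L + 1))) := by
        rw [← mul_sub, abs_mul, abs_of_nonneg hL'.le]
        have := abs_sub_comm (u n) μ
        exact mul_lt_mul_of_pos_left (by rw [← this]; exact h1) hL'
      have hb2 : |(L : ℝ) * u n - ((m n - L * ⌊ξ * α ^ n⌋ : ℤ) : ℝ)| < ε / (2 * (L + 1)) := by
        push_cast
        rw [hun]
        convert h2 using 2
        ring
      calc |(L : ℝ) * μ - ((m n - L * ⌊ξ * α ^ n⌋ : ℤ) : ℝ)|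
          ≤ |(L : ℝ) * μ - (L : ℝ) * u n| + |(L : ℝ) * u n - ((m n - L * ⌊ξ * α ^ n⌋ : ℤ) : ℝ)| :=
            abs_sub_le _ _ _
        _ < (L : ℝ) * (ε / (2 * (L + 1))) + ε / (2 * (L + 1)) := by linarith
        _ = ((L : ℝ) + 1) * (ε / (2 * ((L : ℝ) + 1))) := by ring
        _ = ε / 2 := by field_simp
        _ < ε := by linarith
    rw [Int.isClosedEmbedding_coe_real.isClosed_range.closure_eq] at hcl
    obtain ⟨k, hk⟩ := hcl
    have hk0 : 0 ≤ k := by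
      have : (0 : ℝ) ≤ (k : ℝ) := by rw [hk]; positivity
      exact_mod_cast this
    have hkL : k ≤ (L : ℤ) := by
      have : (k : ℝ) ≤ (L : ℝ) := by
        rw [hk]
        calc (L : ℝ) * μ ≤ (L : ℝ) * 1 := by
              exact mul_le_mul_of_nonneg_left hle1 hL'.le
          _ = L := mul_one _
      exact_mod_cast this
    refine ⟨k.toNat, by omega, ?_⟩
    have hkr : ((k.toNat : ℕ) : ℝ) = (k : ℝ) := by
      exact_mod_cast Int.toNat_of_nonneg hk0
    rw [hkr, hk]
    rw [mul_comm, mul_div_assoc, div_self hL'.ne', mul_one]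
  refine ⟨main, ?_⟩
  have hsub : {x : ℝ | MapClusterPt x atTop u} ⊆ (fun j : ℕ => (j : ℝ) / L) '' Set.Iic L := by
    intro μ hμ
    obtain ⟨j, hj, hμj⟩ := main μ hμ
    exact ⟨j, hj, hμj.symm⟩
  exact ((Set.finite_Iic L).image _).subset hsub
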